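/- (Lemma 1) Suppose every user k offloads a task of size β_k L_k ≥ 0 bits, each rate R_k is strictly positive, and all users share the same offloading time T, i.e., β_k L_k / R_k = T for every k ∈ {1,…,K}. Then for every k ∈ {1,…,K}, the offloading time can be equivalently expressed as T = (∑_{i=1}^{k} β_i L_i) / (B·log₂((∑_{i=1}^{k} P_i g_i + Nσ²)/(Nσ²))). -/
import Mathlib


/-!
STATEMENT 1 (Lemma 1): If every user k offloads β_k L_k ≥ 0 bits, each SIC rate
R_k is strictly positive, and all users share the same offloading time T
(β_k L_k / R_k = T for all k), then for every k,
T = (∑_{i=1}^{k} β_i L_i) / (B·log₂((∑_{i=1}^{k} P_i g_i + Nσ²)/(Nσ²))).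
Users are indexed 0,…,K-1, so "user k ∈ {1,…,K}" is index k < K and
"the first k users" are indices 0,…,k (range (k+1)).
-/
theorem equal_offload_time_equiv
    (K : ℕ) (hK : 1 ≤ K)
    (P g : ℕ → ℝ) (hP : ∀ i, 0 ≤ P i) (hg : ∀ i, 0 ≤ g i)
    (B Nσ : ℝ) (hB : 0 < B) (hNσ : 0 < Nσ)
    (R : ℕ → ℝ)
    (hR : ∀ k, R k = B * Real.logb 2
      ((∑ i ∈ Finset.range (k + 1), P i * g i + Nσ) /
        (∑ j ∈ Finset.range k, P j * g j + Nσ)))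
    (β L : ℕ → ℝ)
    (hβL : ∀ k, 0 ≤ β k * L k)
    (hRpos : ∀ k < K, 0 < R k)
    (T : ℝ)
    (hT : ∀ k < K, β k * L k / R k = T) :
    ∀ k < K, T = (∑ i ∈ Finset.range (k + 1), β i * L i) /
      (B * Real.logb 2 ((∑ i ∈ Finset.range (k + 1), P i * g i + Nσ) / Nσ)) := by
  intro k hk
  set S : ℕ → ℝ := fun m => ∑ i ∈ Finset.range m, P i * g i + Nσ with hS
  have hSpos : ∀ m, 0 < S m := by
    intro m
    have : 0 ≤ ∑ i ∈ Finset.range m, P i * g i :=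
      Finset.sum_nonneg fun i _ => mul_nonneg (hP i) (hg i)
    simp only [hS]
    linarith
  -- telescoping sum of rates
  have hsumR : ∑ i ∈ Finset.range (k + 1), R i
      = B * Real.logb 2 (S (k + 1) / Nσ) := by
    have : ∀ i, R i = B * (Real.logb 2 (S (i + 1)) - Real.logb 2 (S i)) := by
      intro i
      rw [hR i, Real.logb_div (hSpos (i + 1)).ne' (hSpos i).ne']
    calc ∑ i ∈ Finset.range (k + 1), R i
        = ∑ i ∈ Finset.range (k + 1),
            B * (Real.logb 2 (S (i + 1)) - Real.logb 2 (S i)) := by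
          exact Finset.sum_congr rfl fun i _ => this i
      _ = B * ∑ i ∈ Finset.range (k + 1),
            ((fun m => Real.logb 2 (S m)) (i + 1) - (fun m => Real.logb 2 (S m)) i) := by
          rw [Finset.mul_sum]
      _ = B * (Real.logb 2 (S (k + 1)) - Real.logb 2 (S 0)) := by
          rw [Finset.sum_range_sub (fun m => Real.logb 2 (S m))]
      _ = B * Real.logb 2 (S (k + 1) / Nσ) := by
          rw [Real.logb_div (hSpos (k + 1)).ne' hNσ.ne']
          simp [hS]
  -- each rate is nonneg, and R k > 0, so the sum is positive
  have hRnn : ∀ i, 0 ≤ R i := by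
    intro i
    rw [hR i]
    have h1 : S i ≤ S (i + 1) := by
      simp only [hS]
      have : 0 ≤ P i * g i := mul_nonneg (hP i) (hg i)
      rw [Finset.sum_range_succ]
      linarith
    have hq : (1 : ℝ) ≤ S (i + 1) / S i := (one_le_div (hSpos i)).mpr h1
    have := Real.logb_nonneg (by norm_num : (1:ℝ) < 2) hq
    positivity
  have hsumpos : 0 < ∑ i ∈ Finset.range (k + 1), R i := by
    have : 0 < R k := hRpos k hk
    calc (0:ℝ) < R k := this
      _ ≤ ∑ i ∈ Finset.range (k + 1), R i := by
          exact Finset.single_le_sum (fun i _ => hRnn i) (Finset.self_mem_range_succ k)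
  -- β i L i = T * R i for i ≤ k
  have hβLR : ∀ i ∈ Finset.range (k + 1), β i * L i = T * R i := by
    intro i hi
    have hiK : i < K := lt_of_le_of_lt (Nat.lt_succ_iff.mp (Finset.mem_range.mp hi)) hk
    have := hT i hiK
    field_simp [(hRpos i hiK).ne'] at this ⊢
    linarith [this]
  have hsumβ : ∑ i ∈ Finset.range (k + 1), β i * L i
      = T * ∑ i ∈ Finset.range (k + 1), R i := by
    rw [Finset.mul_sum]
    exact Finset.sum_congr rfl hβLR
  rw [hsumβ, ← hsumR]
  field_simp [hsumpos.ne']
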